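/- For every q > 3√3/2, all three roots of the cubic z³ − z + 1/q = 0 are real, exactly one of these roots lies in the open interval (0, 1/√3), this root q̃ is the smallest positive root of the cubic, and H̃(q) = φ(q̃) = ((1 − q̃)/(1 + q̃)) · exp(q̃/(1 − q̃²)). -/

import Mathlib

open Filter Set

/-- `w` is the root of `q (z^3 - z) + 1 = 0` with `Im w ≥ 0`, `Re w > 0` having the
smallest real part among all such roots. -/
def IsQtilde (q : ℝ) (w : ℂ) : Prop :=
  (q : ℂ) * (w ^ 3 - w) + 1 = 0 ∧ 0 ≤ w.im ∧ 0 < w.re ∧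
    ∀ z : ℂ, (q : ℂ) * (z ^ 3 - z) + 1 = 0 → 0 ≤ z.im → 0 < z.re → w.re ≤ z.re

/-- `H̃(q) = |(q̃ - 1)/(q̃ + 1)| · exp(q · Re(q̃²))` where `q̃` is the distinguished root. -/
noncomputable def Htilde (q : ℝ) : ℝ :=
  ‖(Classical.epsilon (IsQtilde q) - 1) / (Classical.epsilon (IsQtilde q) + 1)‖ *
    Real.exp (q * ((Classical.epsilon (IsQtilde q)) ^ 2).re)

/-- `φ(x) = ((1 - x)/(1 + x)) · exp(x/(1 - x²))`. -/
noncomputable def phi (x : ℝ) : ℝ :=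
  (1 - x) / (1 + x) * Real.exp (x / (1 - x ^ 2))

/-- A complex number whose square is a positive real is real. -/
lemma im_eq_zero_of_sq_eq_pos {w : ℂ} {r : ℝ} (hr : 0 < r) (h : w ^ 2 = (r : ℂ)) :
    w.im = 0 := by
  have h1 : (w ^ 2).im = 0 := by rw [h]; simp
  have h2 : (w ^ 2).re = r := by rw [h]; simp
  rw [sq, Complex.mul_im] at h1
  rw [sq, Complex.mul_re] at h2
  by_contra him
  have h3 : w.re = 0 := by
    rcases mul_eq_zero.mp (by linarith : w.re * w.im = 0) with h | h
    · exact h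
    · exact absurd h him
  rw [h3] at h2
  nlinarith [mul_self_nonneg w.im]

/-- For q > 3√3/2 all roots of z³ - z + 1/q = 0 are real, exactly one lies in
(0, 1/√3), this root is the smallest positive root, and H̃(q) = φ of it. -/
theorem Htilde_eq_phi (q : ℝ) (hq : 3 * Real.sqrt 3 / 2 < q) :
    (∀ z : ℂ, z ^ 3 - z + 1 / (q : ℂ) = 0 → z.im = 0) ∧
    ∃ x : ℝ, x ^ 3 - x + 1 / q = 0 ∧ x ∈ Set.Ioo 0 (1 / Real.sqrt 3) ∧
      (∀ y : ℝ, y ^ 3 - y + 1 / q = 0 → y ∈ Set.Ioo 0 (1 / Real.sqrt 3) → y = x) ∧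
      (∀ y : ℝ, y ^ 3 - y + 1 / q = 0 → 0 < y → x ≤ y) ∧
      Htilde q = phi x := by
  have hs : (0:ℝ) < Real.sqrt 3 := Real.sqrt_pos.mpr (by norm_num)
  have hs2 : Real.sqrt 3 ^ 2 = 3 := Real.sq_sqrt (by norm_num)
  have hq0 : (0:ℝ) < q := lt_trans (by positivity) hq
  have hqC : (q : ℂ) ≠ 0 := by exact_mod_cast hq0.ne'
  set f : ℝ → ℝ := fun t => t ^ 3 - t + 1 / q with hf
  have hf0 : 0 < f 0 := by simp only [hf]; norm_num; positivity
  have hfb : f (1 / Real.sqrt 3) < 0 := by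
    simp only [hf]
    have h1 : 1 / q < 2 / (3 * Real.sqrt 3) := by
      rw [div_lt_div_iff₀ hq0 (by positivity)]
      nlinarith
    have h3 : (1 / Real.sqrt 3) ^ 3 - 1 / Real.sqrt 3 = - (2 / (3 * Real.sqrt 3)) := by
      field_simp
      linear_combination (-1 : ℝ) * hs2
    linarith
  -- get the root x in (0, 1/√3)
  have hmem : (0:ℝ) ∈ Set.Ioo (f (1 / Real.sqrt 3)) (f 0) := ⟨hfb, hf0⟩
  obtain ⟨x, hxmem, hxroot⟩ := intermediate_value_Ioo' (by positivity : (0:ℝ) ≤ 1 / Real.sqrt 3)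
    (Continuous.continuousOn (by fun_prop)) hmem
  obtain ⟨hx0, hx1⟩ := hxmem
  have hxroot : x ^ 3 - x + 1 / q = 0 := hxroot
  have hx13 : x ^ 2 < 1 / 3 := by
    have h := (lt_div_iff₀ hs).mp hx1
    nlinarith
  have hx2 : 0 < 1 - x ^ 2 := by nlinarith
  have hxlt1 : x < 1 := by nlinarith
  -- uniqueness in (0, 1/√3)
  have huniq : ∀ y : ℝ, y ^ 3 - y + 1 / q = 0 → y ∈ Set.Ioo 0 (1 / Real.sqrt 3) → y = x := by
    intro y hy ⟨hy0, hy1⟩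
    by_contra hne
    have h1 : (y - x) * (y ^ 2 + x * y + x ^ 2 - 1) = 0 := by linear_combination hy - hxroot
    rcases mul_eq_zero.mp h1 with h | h
    · exact hne (by linarith [sub_eq_zero.mp h])
    · have hy13 : y ^ 2 < 1 / 3 := by
        have h := (lt_div_iff₀ hs).mp hy1
        nlinarith
      nlinarith [mul_pos hx0 hy0]
  -- minimality among positive roots
  have hmin : ∀ y : ℝ, y ^ 3 - y + 1 / q = 0 → 0 < y → x ≤ y := by
    intro y hy hy0
    by_contra hlt
    push_neg at hlt
    have : y = x := huniq y hy ⟨hy0, lt_trans hlt hx1⟩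
    linarith [this ▸ hlt]
  -- all complex roots are real
  have hxC : (x : ℂ) ^ 3 - (x : ℂ) + 1 / (q : ℂ) = 0 := by
    exact_mod_cast congrArg Complex.ofReal hxroot
  have hreal : ∀ z : ℂ, z ^ 3 - z + 1 / (q : ℂ) = 0 → z.im = 0 := by
    intro z hz
    have h1 : (z - (x:ℂ)) * (z ^ 2 + (x:ℂ) * z + (x:ℂ) ^ 2 - 1) = 0 := by
      linear_combination hz - hxC
    rcases mul_eq_zero.mp h1 with h | h
    · have : z = (x:ℂ) := sub_eq_zero.mp h
      rw [this]; simp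
    · have hsq : (z + (x:ℂ) / 2) ^ 2 = (((4 - 3 * x ^ 2) / 4 : ℝ) : ℂ) := by
        push_cast
        linear_combination h
      have him := im_eq_zero_of_sq_eq_pos (by nlinarith : (0:ℝ) < (4 - 3 * x ^ 2) / 4) hsq
      simpa using him
  -- IsQtilde q x
  have hxQ : IsQtilde q (x : ℂ) := by
    refine ⟨?_, by simp, by simpa using hx0, ?_⟩
    · have hx3 : (x:ℂ) ^ 3 - (x:ℂ) = -(1 / (q:ℂ)) := by linear_combination hxC
      rw [hx3]
      field_simp
      norm_num
    · intro z hz him hre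
      have hz' : z ^ 3 - z + 1 / (q : ℂ) = 0 := by
        field_simp
        linear_combination hz
      have hzim := hreal z hz'
      have hzre : (z.re : ℝ) ^ 3 - z.re + 1 / q = 0 := by
        have hzeq : z = ((z.re : ℝ) : ℂ) := by
          apply Complex.ext <;> simp [hzim]
        rw [hzeq] at hz'
        have : (((z.re : ℝ) ^ 3 - z.re + 1 / q : ℝ) : ℂ) = 0 := by push_cast; linear_combination hz'
        exact_mod_cast this
      simpa using hmin z.re hzre hre
  -- the epsilon is x
  have hW := Classical.epsilon_spec (⟨(x:ℂ), hxQ⟩ : ∃ w, IsQtilde q w)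
  set w := Classical.epsilon (IsQtilde q) with hwdef
  obtain ⟨hw1, hw2, hw3, hw4⟩ := hW
  have hw' : w ^ 3 - w + 1 / (q : ℂ) = 0 := by
    field_simp
    linear_combination hw1
  have hwim : w.im = 0 := hreal w hw'
  have hwre : (w.re : ℝ) ^ 3 - w.re + 1 / q = 0 := by
    have hweq : w = ((w.re : ℝ) : ℂ) := by apply Complex.ext <;> simp [hwim]
    rw [hweq] at hw'
    have : (((w.re : ℝ) ^ 3 - w.re + 1 / q : ℝ) : ℂ) = 0 := by push_cast; linear_combination hw'
    exact_mod_cast this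
  have hle1 : x ≤ w.re := hmin w.re hwre hw3
  have hle2 : w.re ≤ x := by simpa using hw4 (x:ℂ) hxQ.1 (by simp) (by simpa using hx0)
  have hwx : w = (x : ℂ) := by
    apply Complex.ext
    · simp [le_antisymm hle2 hle1]
    · simp [hwim]
  -- compute Htilde
  have hHt : Htilde q = phi x := by
    rw [Htilde, ← hwdef, hwx, phi]
    have habs : ‖((x:ℂ) - 1) / ((x:ℂ) + 1)‖ = (1 - x) / (1 + x) := by
      have : ((x:ℂ) - 1) / ((x:ℂ) + 1) = (((x - 1) / (x + 1) : ℝ) : ℂ) := by push_cast; ring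
      rw [this, Complex.norm_real, Real.norm_eq_abs, abs_div, abs_of_nonpos (by linarith), abs_of_pos (by linarith)]
      ring_nf
    have hre2 : (((x:ℂ)) ^ 2).re = x ^ 2 := by
      rw [show ((x:ℂ)) ^ 2 = ((x ^ 2 : ℝ) : ℂ) by push_cast; ring, Complex.ofReal_re]
    have hkey : q * (x - x ^ 3) = 1 := by
      have h1 : 1 / q = x - x ^ 3 := by linarith
      rw [← h1, mul_one_div_cancel hq0.ne']
    have hqx : q * x ^ 2 = x / (1 - x ^ 2) := by
      rw [eq_div_iff hx2.ne']
      linear_combination x * hkey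
    rw [habs, hre2, hqx]
  exact ⟨hreal, x, hxroot, ⟨hx0, hx1⟩, huniq, hmin, hHt⟩
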